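/- Let g : ℝ → ℝ be differentiable on [m, M] with 0 ≤ g'(u) ≤ D there, and let μ > 0 satisfy μ·D ≤ 5/24. Then the function G(a, b, c) = ((a + 10b + c)/12) + 2μ·(g(a) - 2g(b) + g(c)) is monotonically nondecreasing in each argument on [m, M]³, and maps [m, M]³ into [m, M]. -/

import Mathlib

private lemma mono_aux (m M : ℝ) (f f' : ℝ → ℝ)
    (hf : ∀ u ∈ Set.Icc m M, HasDerivAt f (f' u) u)
    (h0 : ∀ u ∈ Set.Icc m M, 0 ≤ f' u) : MonotoneOn f (Set.Icc m M) := by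
  apply monotoneOn_of_deriv_nonneg (convex_Icc m M)
  · exact fun u hu => (hf u hu).continuousAt.continuousWithinAt
  · intro u hu
    rw [interior_Icc] at hu
    exact (hf u (Set.mem_Icc_of_Ioo hu)).differentiableAt.differentiableWithinAt
  · intro u hu
    rw [interior_Icc] at hu
    have hu' : u ∈ Set.Icc m M := Set.mem_Icc_of_Ioo hu
    rw [(hf u hu').deriv]
    exact h0 u hu'

theorem stmt_8 (m M D mu : ℝ) (hmM : m ≤ M) (g g' : ℝ → ℝ)
    (hg : ∀ u ∈ Set.Icc m M, HasDerivAt g (g' u) u)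
    (hg' : ∀ u ∈ Set.Icc m M, 0 ≤ g' u ∧ g' u ≤ D)
    (hmu : 0 < mu) (hcfl : mu * D ≤ 5 / 24) :
    let G : ℝ → ℝ → ℝ → ℝ := fun a b c =>
      (a + 10 * b + c) / 12 + 2 * mu * (g a - 2 * g b + g c)
    (∀ a ∈ Set.Icc m M, ∀ a' ∈ Set.Icc m M, ∀ b ∈ Set.Icc m M, ∀ c ∈ Set.Icc m M,
        a ≤ a' → G a b c ≤ G a' b c) ∧
    (∀ a ∈ Set.Icc m M, ∀ b ∈ Set.Icc m M, ∀ b' ∈ Set.Icc m M, ∀ c ∈ Set.Icc m M,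
        b ≤ b' → G a b c ≤ G a b' c) ∧
    (∀ a ∈ Set.Icc m M, ∀ b ∈ Set.Icc m M, ∀ c ∈ Set.Icc m M, ∀ c' ∈ Set.Icc m M,
        c ≤ c' → G a b c ≤ G a b c') ∧
    (∀ a ∈ Set.Icc m M, ∀ b ∈ Set.Icc m M, ∀ c ∈ Set.Icc m M,
        G a b c ∈ Set.Icc m M) := by
  intro G
  -- g is monotone on [m, M]
  have hgmono : MonotoneOn g (Set.Icc m M) :=
    mono_aux m M g g' hg (fun u hu => (hg' u hu).1)
  -- x ↦ D*x - g x is monotone on [m, M]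
  have hDmono : MonotoneOn (fun x => D * x - g x) (Set.Icc m M) := by
    apply mono_aux m M _ (fun u => D - g' u)
    · intro u hu
      have := ((hasDerivAt_id u).const_mul D).sub (hg u hu)
      simp only [mul_one] at this
      exact this
    · intro u hu
      linarith [(hg' u hu).2]
  have hslope : ∀ x ∈ Set.Icc m M, ∀ y ∈ Set.Icc m M, x ≤ y →
      g y - g x ≤ D * (y - x) := by
    intro x hx y hy hxy
    have := hDmono hx hy hxy
    simp only at this
    linarith
  have hmonoA : ∀ a ∈ Set.Icc m M, ∀ a' ∈ Set.Icc m M, ∀ b ∈ Set.Icc m M,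
      ∀ c ∈ Set.Icc m M, a ≤ a' → G a b c ≤ G a' b c := by
    intro a ha a' ha' b hb c hc haa
    have h1 := hgmono ha ha' haa
    simp only [G]
    nlinarith
  have hmonoB : ∀ a ∈ Set.Icc m M, ∀ b ∈ Set.Icc m M, ∀ b' ∈ Set.Icc m M,
      ∀ c ∈ Set.Icc m M, b ≤ b' → G a b c ≤ G a b' c := by
    intro a ha b hb b' hb' c hc hbb
    have h1 := hslope b hb b' hb' hbb
    have h2 : mu * (g b' - g b) ≤ mu * (D * (b' - b)) :=
      mul_le_mul_of_nonneg_left h1 hmu.le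
    have h3 : mu * D * (b' - b) ≤ (5 / 24) * (b' - b) :=
      mul_le_mul_of_nonneg_right hcfl (by linarith)
    simp only [G]
    nlinarith
  have hmonoC : ∀ a ∈ Set.Icc m M, ∀ b ∈ Set.Icc m M, ∀ c ∈ Set.Icc m M,
      ∀ c' ∈ Set.Icc m M, c ≤ c' → G a b c ≤ G a b c' := by
    intro a ha b hb c hc c' hc' hcc
    have h1 := hgmono hc hc' hcc
    simp only [G]
    nlinarith
  refine ⟨hmonoA, hmonoB, hmonoC, ?_⟩
  intro a ha b hb c hc
  have hm : m ∈ Set.Icc m M := Set.left_mem_Icc.2 hmM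
  have hM : M ∈ Set.Icc m M := Set.right_mem_Icc.2 hmM
  have hdiag : ∀ t : ℝ, G t t t = t := by
    intro t; simp only [G]; ring
  constructor
  · calc m = G m m m := (hdiag m).symm
      _ ≤ G a m m := hmonoA m hm a ha m hm m hm ha.1
      _ ≤ G a b m := hmonoB a ha m hm b hb m hm hb.1
      _ ≤ G a b c := hmonoC a ha b hb m hm c hc hc.1
  · calc G a b c ≤ G M b c := hmonoA a ha M hM b hb c hc ha.2
      _ ≤ G M M c := hmonoB M hM b hb M hM c hc hb.2
      _ ≤ G M M M := hmonoC M hM M hM c hc M hM hc.2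
      _ = M := hdiag M
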